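/- Let R be a reduced commutative ring and let I be a pure ideal of R. Then R is Gaussian if and only if R⋈I is Gaussian. -/

import Mathlib

universe u

open scoped TensorProduct

namespace Paper

/-- The amalgamated duplication `R ⋈ I`, as the subring
`{(r, s) : s - r ∈ I} = {(r, r+i) : r ∈ R, i ∈ I}` of `R × R`. -/
def dup (R : Type*) [CommRing R] (I : Ideal R) : Subring (R × R) where
  carrier := {p | p.2 - p.1 ∈ I}
  zero_mem' := by simp
  one_mem' := by simp
  add_mem' := by
    intro a b ha hb
    simp only [Set.mem_setOf_eq, Prod.fst_add, Prod.snd_add] at *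
    have h : a.2 + b.2 - (a.1 + b.1) = (a.2 - a.1) + (b.2 - b.1) := by ring
    rw [h]; exact I.add_mem ha hb
  neg_mem' := by
    intro a ha
    simp only [Set.mem_setOf_eq, Prod.fst_neg, Prod.snd_neg] at *
    have h : -a.2 - -a.1 = -(a.2 - a.1) := by ring
    rw [h]; exact I.neg_mem ha
  mul_mem' := by
    intro a b ha hb
    simp only [Set.mem_setOf_eq, Prod.fst_mul, Prod.snd_mul] at *
    have h : a.2 * b.2 - a.1 * b.1 = a.2 * (b.2 - b.1) + (a.2 - a.1) * b.1 := by ring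
    rw [h]; exact I.add_mem (I.mul_mem_left _ hb) (I.mul_mem_right _ ha)

lemma mem_dup {R : Type*} [CommRing R] {I : Ideal R} {p : R × R} :
    p ∈ dup R I ↔ p.2 - p.1 ∈ I := Iff.rfl

/-- The diagonal embedding `R → R ⋈ I`, `r ↦ (r, r)`. -/
def diag (R : Type*) [CommRing R] (I : Ideal R) : R →+* dup R I where
  toFun r := ⟨(r, r), mem_dup.mpr (by simp)⟩
  map_one' := rfl
  map_mul' _ _ := rfl
  map_zero' := rfl
  map_add' _ _ := rfl

noncomputable instance dupAlgebra (R : Type*) [CommRing R] (I : Ideal R) :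
    Algebra R (dup R I) := (diag R I).toAlgebra

/-- `pdLE R n M` means that `M` has projective dimension `≤ n` as an `R`-module. -/
def pdLE (R : Type u) [CommRing R] : ℕ → (M : Type u) → [AddCommGroup M] → [Module R M] → Prop
  | 0, M, _, _ => Module.Projective R M
  | (n + 1), M, _, _ => pdLE R n (LinearMap.ker (Finsupp.linearCombination R (id : M → M)))

/-- `fdLE R n M` means that `M` has flat dimension `≤ n` as an `R`-module. -/
def fdLE (R : Type u) [CommRing R] : ℕ → (M : Type u) → [AddCommGroup M] → [Module R M] → Prop
  | 0, M, _, _ => Module.Flat R M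
  | (n + 1), M, _, _ => fdLE R n (LinearMap.ker (Finsupp.linearCombination R (id : M → M)))

/-- The projective dimension of an `R`-module `M`, as an element of `ℕ∞`. -/
noncomputable def projDim (R : Type u) [CommRing R] (M : Type u) [AddCommGroup M]
    [Module R M] : ℕ∞ :=
  sInf {n : ℕ∞ | ∃ k : ℕ, (k : ℕ∞) = n ∧ pdLE R k M}

/-- The flat dimension of an `R`-module `M`, as an element of `ℕ∞`. -/
noncomputable def flatDim (R : Type u) [CommRing R] (M : Type u) [AddCommGroup M]
    [Module R M] : ℕ∞ :=
  sInf {n : ℕ∞ | ∃ k : ℕ, (k : ℕ∞) = n ∧ fdLE R k M}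

/-- The global dimension of `R`: the supremum of projective dimensions of `R`-modules. -/
noncomputable def gldim (R : Type u) [CommRing R] : ℕ∞ :=
  ⨆ (M : Type u) (_ : AddCommGroup M) (_ : Module R M), projDim R M

/-- The weak global dimension of `R`: the supremum of flat dimensions of `R`-modules. -/
noncomputable def wdim (R : Type u) [CommRing R] : ℕ∞ :=
  ⨆ (M : Type u) (_ : AddCommGroup M) (_ : Module R M), flatDim R M


/-- The first projection `R ⋈ I → R`, `(r, r+i) ↦ r`. -/
def dupFst (R : Type*) [CommRing R] (I : Ideal R) : dup R I →+* R :=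
  (RingHom.fst R R).comp (dup R I).subtype

/-- The second projection `R ⋈ I → R`, `(r, r+i) ↦ r + i`. -/
def dupSnd (R : Type*) [CommRing R] (I : Ideal R) : dup R I →+* R :=
  (RingHom.snd R R).comp (dup R I).subtype

/-- A commutative ring is von Neumann regular if every `a` satisfies `a = a²b` for some `b`. -/
def IsVNRegular (R : Type*) [CommRing R] : Prop := ∀ a : R, ∃ b : R, a = a * a * b

/-- A commutative ring is semihereditary if every finitely generated ideal is projective. -/
def IsSemihereditary (R : Type*) [CommRing R] : Prop :=
  ∀ J : Ideal R, J.FG → Module.Projective R J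

/-- A commutative ring is coherent if every finitely generated ideal is finitely presented. -/
def IsCoherentRing (R : Type*) [CommRing R] : Prop :=
  ∀ J : Ideal R, J.FG → Module.FinitePresentation R J

/-- The content of a polynomial: the ideal generated by its coefficients. -/
def contentIdeal {R : Type*} [CommRing R] (f : Polynomial R) : Ideal R :=
  Ideal.span (Set.range f.coeff)

/-- A commutative ring is Gaussian if `c(fg) = c(f)c(g)` for all polynomials `f, g`. -/
def IsGaussianRing (R : Type*) [CommRing R] : Prop :=
  ∀ f g : Polynomial R, contentIdeal (f * g) = contentIdeal f * contentIdeal g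

/-- `R` is a `(1,d)`-ring if every finitely presented (i.e. `1`-presented) `R`-module has
projective dimension at most `d`. -/
def IsOneDRing (R : Type u) [CommRing R] (d : ℕ) : Prop :=
  ∀ (M : Type u) [AddCommGroup M] [Module R M],
    Module.FinitePresentation R M → projDim R M ≤ (d : ℕ∞)

/-- The trace ideal of an `R`-module `M`: the sum of the images of all `R`-linear maps
`M → R`. -/
def traceIdeal (R : Type*) [CommRing R] (M : Type*) [AddCommGroup M] [Module R M] : Ideal R :=
  ⨆ f : M →ₗ[R] R, LinearMap.range f


theorem exists_mul_self_of_flat (R : Type u) [CommRing R] (I : Ideal R)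
    (hpure : Module.Flat R (R ⧸ I)) {a : R} (ha : a ∈ I) : ∃ e ∈ I, e * a = a := by
  have h0 : ∑ _i : PUnit.{u+1}, a • (Ideal.Quotient.mk I 1) = 0 := by
    have h : a • (1 : R ⧸ I) = 0 := by
      rw [Algebra.smul_def, mul_one, Ideal.Quotient.algebraMap_eq,
        Ideal.Quotient.eq_zero_iff_mem]
      exact ha
    simp [h]
  obtain ⟨κ, c, y, hy, hc⟩ :=
    Module.Flat.isTrivialRelation_of_sum_smul_eq_zero (M := R ⧸ I) h0
  choose r hr using fun j => Ideal.Quotient.mk_surjective (y j)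
  refine ⟨1 - ∑ j, c PUnit.unit j * r j, ?_, ?_⟩
  · rw [← Ideal.Quotient.eq_zero_iff_mem]
    have h1 := hy PUnit.unit
    simp only [← hr] at h1
    have : ∀ j, c PUnit.unit j • Ideal.Quotient.mk I (r j)
        = Ideal.Quotient.mk I (c PUnit.unit j * r j) := by
      intro j
      rw [Algebra.smul_def, Ideal.Quotient.algebraMap_eq, ← map_mul]
    simp only [this, ← map_sum] at h1
    rw [map_sub, ← h1, map_one, sub_self]
  · have hz : ∀ j, a * c PUnit.unit j = 0 := by
      intro j; simpa using hc j
    rw [sub_mul, one_mul, Finset.sum_mul]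
    have : ∑ j, c PUnit.unit j * r j * a = 0 := by
      apply Finset.sum_eq_zero; intro j _
      calc c PUnit.unit j * r j * a = (a * c PUnit.unit j) * r j := by ring
      _ = 0 := by rw [hz j, zero_mul]
    rw [this, sub_zero]

lemma contentIdeal_map {S R : Type*} [CommRing S] [CommRing R] (φ : S →+* R)
    (f : Polynomial S) : contentIdeal (f.map φ) = (contentIdeal f).map φ := by
  unfold contentIdeal
  rw [Ideal.map_span]
  congr 1
  have h : (f.map φ).coeff = φ ∘ f.coeff := funext fun n => Polynomial.coeff_map φ n
  rw [h, Set.range_comp]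

lemma contentIdeal_mul_le {R : Type*} [CommRing R] (f g : Polynomial R) :
    contentIdeal (f * g) ≤ contentIdeal f * contentIdeal g := by
  unfold contentIdeal
  rw [Ideal.span_le]
  rintro _ ⟨n, rfl⟩
  rw [Polynomial.coeff_mul, SetLike.mem_coe]
  apply Ideal.sum_mem
  intro c _
  exact Ideal.mul_mem_mul (Ideal.subset_span ⟨c.1, rfl⟩) (Ideal.subset_span ⟨c.2, rfl⟩)

lemma gaussian_of_surjective {S R : Type*} [CommRing S] [CommRing R] (φ : S →+* R)
    (hφ : Function.Surjective φ) (hS : IsGaussianRing S) : IsGaussianRing R := by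
  intro f g
  obtain ⟨F, rfl⟩ := Polynomial.map_surjective φ hφ f
  obtain ⟨G, rfl⟩ := Polynomial.map_surjective φ hφ g
  rw [← Polynomial.map_mul, contentIdeal_map, contentIdeal_map, contentIdeal_map,
    hS F G, Ideal.map_mul]

/-- If `R` is a reduced ring and `I` a pure ideal of `R`, then `R` is Gaussian if and only
if `R ⋈ I` is Gaussian. -/
theorem isGaussian_dup_iff (R : Type u) [CommRing R] [IsReduced R] (I : Ideal R)
    (hpure : Module.Flat R (R ⧸ I)) :
    IsGaussianRing R ↔ IsGaussianRing (dup R I) := by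
  constructor
  · intro hR f g
    refine le_antisymm (contentIdeal_mul_le f g) ?_
    intro x hx
    have hs1 : Function.Surjective (dupFst R I) := fun r => ⟨⟨(r, r), by simp [mem_dup]⟩, rfl⟩
    have hs2 : Function.Surjective (dupSnd R I) := fun r => ⟨⟨(r, r), by simp [mem_dup]⟩, rfl⟩
    have key : ∀ (π : dup R I →+* R), Function.Surjective π →
        x ∈ contentIdeal (f * g) ⊔ Ideal.comap π ⊥ := by
      intro π hπ
      have hmap : (contentIdeal f * contentIdeal g).map π = (contentIdeal (f * g)).map π := by
        rw [Ideal.map_mul, ← contentIdeal_map, ← contentIdeal_map, ← hR,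
          ← Polynomial.map_mul, contentIdeal_map]
      have hx' : π x ∈ (contentIdeal (f * g)).map π := hmap ▸ Ideal.mem_map_of_mem π hx
      have hcm := Ideal.comap_map_of_surjective π hπ (contentIdeal (f * g))
      rw [← hcm]
      exact Ideal.mem_comap.mpr hx'
    obtain ⟨u, hu, k1, hk1, hx1⟩ := Submodule.mem_sup.mp (key _ hs1)
    obtain ⟨v, hv, k2, hk2, hx2⟩ := Submodule.mem_sup.mp (key _ hs2)
    have hk1' : (k1 : R × R).1 = 0 := by
      have := Ideal.mem_comap.mp hk1
      simpa [dupFst, Ideal.mem_bot] using this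
    have hk2' : (k2 : R × R).2 = 0 := by
      have := Ideal.mem_comap.mp hk2
      simpa [dupSnd, Ideal.mem_bot] using this
    have hk1I : (k1 : R × R).2 ∈ I := by
      have h := mem_dup.mp k1.2
      rw [hk1', sub_zero] at h
      exact h
    obtain ⟨e, heI, he⟩ := exists_mul_self_of_flat R I hpure hk1I
    have heE : (e : R) - 0 ∈ I := by simpa using heI
    set E : dup R I := ⟨(0, e), mem_dup.mpr heE⟩ with hE
    have h1 : E * k1 = k1 := by
      apply Subtype.ext
      show ((0, e) : R × R) * (k1 : R × R) = (k1 : R × R)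
      refine Prod.ext_iff.mpr ⟨?_, ?_⟩
      · show 0 * (k1 : R × R).1 = (k1 : R × R).1
        rw [zero_mul, hk1']
      · exact he
    have h2 : E * k2 = 0 := by
      apply Subtype.ext
      show ((0, e) : R × R) * (k2 : R × R) = ((0 : dup R I) : R × R)
      refine Prod.ext_iff.mpr ⟨?_, ?_⟩
      · show 0 * (k2 : R × R).1 = 0
        rw [zero_mul]
      · show e * (k2 : R × R).2 = 0
        rw [hk2', mul_zero]
    have e1 : x - E * x = u - E * u := by
      rw [← hx1, mul_add, h1]; ring
    have e2 : E * x = E * v := by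
      rw [← hx2, mul_add, h2, add_zero]
    have hx3 : x = (u - E * u) + E * v := by rw [← e1, ← e2]; ring
    rw [hx3]
    exact add_mem (sub_mem hu (Ideal.mul_mem_left _ _ hu)) (Ideal.mul_mem_left _ _ hv)
  · intro hS
    refine gaussian_of_surjective (dupFst R I) ?_ hS
    exact fun r => ⟨⟨(r, r), by simp [mem_dup]⟩, rfl⟩


end Paper
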